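/- Let M be a maximal ideal of a domain D and Q a maximal ideal of a ring of functions R from E to D. If each f ∈ R takes values in only finitely many residue classes mod M, then exactly one of the following holds: (1) Q contains R(E,M) = {f ∈ R : f(E) ⊆ M}; (2) Q contains an M-unit-valued function. -/

import Mathlib

set_option maxHeartbeats 1000000
set_option synthInstance.maxHeartbeats 400000


theorem stmt14 {D : Type*} [CommRing D] [IsDomain D] {E : Set D}
    (R : Subring (↥E → D)) (hconst : ∀ d : D, (fun _ : ↥E => d) ∈ R)
    (M : Ideal D) (hM : M.IsMaximal)
    (hfin : ∀ f : R,
      (Set.range fun e : ↥E => Ideal.Quotient.mk M ((f : ↥E → D) e)).Finite)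
    (Q : Ideal R) (hQ : Q.IsMaximal) :
    Xor' (∀ f : R, (∀ e : ↥E, (f : ↥E → D) e ∈ M) → f ∈ Q)
      (∃ f ∈ Q, ∀ e : ↥E, (f : ↥E → D) e ∉ M) := by
  classical
  -- the constant-function ring hom
  let C : D →+* R :=
    { toFun := fun d => ⟨fun _ => d, hconst d⟩
      map_one' := rfl
      map_mul' := fun a b => rfl
      map_zero' := rfl
      map_add' := fun a b => rfl }
  -- evaluation ring homs
  let ev : ↥E → (R →+* D) := fun e => (Pi.evalRingHom (fun _ => D) e).comp R.subtype
  have hev : ∀ (f : R) (e : ↥E), ev e f = (f : ↥E → D) e := fun f e => rfl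
  have h1M : (1 : D) ∉ M := fun h => hM.ne_top (M.eq_top_of_isUnit_mem h isUnit_one)
  -- both alternatives cannot hold simultaneously
  have hnotboth : (∀ f : R, (∀ e : ↥E, (f : ↥E → D) e ∈ M) → f ∈ Q) →
      (∃ f ∈ Q, ∀ e : ↥E, (f : ↥E → D) e ∉ M) → False := by
    rintro hA ⟨f, hfQ, hfM⟩
    set rep : D ⧸ M → D := Function.surjInv Ideal.Quotient.mk_surjective with hrep
    have hrepmk : ∀ s, Ideal.Quotient.mk M (rep s) = s :=
      fun s => Function.surjInv_eq Ideal.Quotient.mk_surjective s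
    set T := (hfin f).toFinset with hT
    set g : R := ∏ s ∈ T, (f - C (rep s)) with hg
    -- g takes values in M
    have hgM : ∀ e : ↥E, (g : ↥E → D) e ∈ M := by
      intro e
      have hmem : Ideal.Quotient.mk M ((f : ↥E → D) e) ∈ T := by
        rw [hT, Set.Finite.mem_toFinset]; exact ⟨e, rfl⟩
      have hfac : ev e (f - C (rep (Ideal.Quotient.mk M ((f : ↥E → D) e)))) ∈ M := by
        have : Ideal.Quotient.mk M ((f : ↥E → D) e) =
            Ideal.Quotient.mk M (rep (Ideal.Quotient.mk M ((f : ↥E → D) e))) :=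
          (hrepmk _).symm
        have h2 := Ideal.Quotient.eq.mp this
        simp [ev, hev]; exact h2
      obtain ⟨k, hk⟩ :=
        Finset.dvd_prod_of_mem (fun s => (f - C (rep s))) hmem
      have : (g : ↥E → D) e = ev e ((f - C (rep (Ideal.Quotient.mk M ((f : ↥E → D) e)))) * k) := by
        rw [← hev g e, hg, hk]
      rw [this, map_mul]
      exact M.mul_mem_right _ hfac
    have hgQ : g ∈ Q := hA g hgM
    -- in R/Q, g equals the constant function with value c = ∏ (-rep s)
    set c : D := ∏ s ∈ T, (-rep s) with hc
    have hmkg : Ideal.Quotient.mk Q g = Ideal.Quotient.mk Q (C c) := by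
      rw [hg, hc, map_prod, map_prod, map_prod]
      refine Finset.prod_congr rfl fun s _ => ?_
      rw [map_sub, Ideal.Quotient.eq_zero_iff_mem.mpr hfQ, zero_sub, map_neg, map_neg]
    have hCcQ : C c ∈ Q := by
      have : Ideal.Quotient.mk Q (C c) = 0 := by
        rw [← hmkg, Ideal.Quotient.eq_zero_iff_mem]; exact hgQ
      exact Ideal.Quotient.eq_zero_iff_mem.mp this
    -- c is not in M
    have hcM : c ∉ M := by
      rw [hc]
      refine Finset.prod_induction _ (fun x => x ∉ M) ?_ ?_ ?_
      · intro a b ha hb hab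
        rcases (hM.isPrime.mem_or_mem hab) with h | h
        · exact ha h
        · exact hb h
      · exact h1M
      · intro s hs hmem
        rw [hT, Set.Finite.mem_toFinset] at hs
        obtain ⟨e, he⟩ := hs
        have : rep s ∈ M := by simpa using M.neg_mem hmem
        have h0 : s = 0 := by
          rw [← hrepmk s, Ideal.Quotient.eq_zero_iff_mem]; exact this
        rw [← he, Ideal.Quotient.eq_zero_iff_mem] at h0
        exact hfM e h0
    obtain ⟨d, m, hmM, hdm⟩ := hM.exists_inv hcM
    have hCmQ : C m ∈ Q := hA (C m) (fun e => hmM)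
    have h1Q : (1 : R) ∈ Q := by
      have : C d * C c + C m = 1 := by
        rw [← map_mul, ← map_add, hdm, map_one]
      rw [← this]
      exact Q.add_mem (Q.mul_mem_left _ hCcQ) hCmQ
    exact hQ.ne_top (Q.eq_top_of_isUnit_mem h1Q isUnit_one)
  -- if no M-unit-valued function is in Q, then Q contains all M-valued functions
  have hAofnotB : ¬(∃ f ∈ Q, ∀ e : ↥E, (f : ↥E → D) e ∉ M) →
      ∀ f : R, (∀ e : ↥E, (f : ↥E → D) e ∈ M) → f ∈ Q := by
    intro hB f hfM
    by_contra hfQ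
    obtain ⟨g, q, hqQ, hgq⟩ := hQ.exists_inv hfQ
    refine hB ⟨q, hqQ, fun e hqM => ?_⟩
    have hone : (1 : D) ∈ M := by
      have h2 : ev e (g * f + q) = ev e 1 := by rw [hgq]
      rw [map_add, map_mul, map_one] at h2
      rw [← h2]
      exact M.add_mem (M.mul_mem_left _ (hfM e)) hqM
    exact h1M hone
  by_cases hB : ∃ f ∈ Q, ∀ e : ↥E, (f : ↥E → D) e ∉ M
  · exact Or.inr ⟨hB, fun hA => hnotboth hA hB⟩
  · exact Or.inl ⟨hAofnotB hB, hB⟩
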